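/- Let (Σ, G, Γ) be a Γ-graded discrete R-twist over an ample Hausdorff groupoid G. For each nonzero homogeneous element g_γ ∈ A_R(G; Σ)_γ, there exists a compact open bisection B of Σ contained in Σ_γ such that f = 1̃_{B⁻¹} * g_γ is a nonzero element of A_R(G_ε; Σ_ε) whose support meets Σ⁽⁰⁾, and indeed supp(f) ⊆ Σ_ε. -/

import Mathlib

open Set Function TopologicalSpace Classical
noncomputable section

universe u v w

/-- An étale topological groupoid, encoded with total operations:
`mul a b` is only meaningful when `src a = rng b`. -/
structure EtaleGroupoid (G : Type u) [TopologicalSpace G] where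
  mul : G → G → G
  inv : G → G
  src : G → G
  rng : G → G
  rng_mul_self : ∀ g, mul (rng g) g = g
  mul_src_self : ∀ g, mul g (src g) = g
  src_inv : ∀ g, src (inv g) = rng g
  rng_inv : ∀ g, rng (inv g) = src g
  inv_inv : ∀ g, inv (inv g) = g
  inv_mul_self : ∀ g, mul (inv g) g = src g
  mul_inv_self : ∀ g, mul g (inv g) = rng g
  mul_assoc' : ∀ a b c, src a = rng b → src b = rng c →
    mul (mul a b) c = mul a (mul b c)
  src_mul : ∀ a b, src a = rng b → src (mul a b) = src b
  rng_mul : ∀ a b, src a = rng b → rng (mul a b) = rng a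
  continuous_inv : Continuous inv
  continuousOn_mul :
    ContinuousOn (fun p : G × G => mul p.1 p.2) {p : G × G | src p.1 = rng p.2}
  isLocalHomeomorph_src : IsLocalHomeomorph src

namespace EtaleGroupoid

variable {G : Type u} [TopologicalSpace G] (𝒢 : EtaleGroupoid G)

/-- The unit space `G⁽⁰⁾`. -/
def unitSpace : Set G := Set.range 𝒢.src

/-- The isotropy bundle `Iso(G) = {γ : r γ = s γ}`. -/
def iso : Set G := {g | 𝒢.rng g = 𝒢.src g}

/-- The isotropy group `Gᵤᵘ` at a unit `u`. -/
def isoAt (u : G) : Set G := {g | 𝒢.rng g = u ∧ 𝒢.src g = u}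

/-- `U` is a bisection: `src` and `rng` are injective on `U`. -/
def IsBisection (U : Set G) : Prop := Set.InjOn 𝒢.src U ∧ Set.InjOn 𝒢.rng U

/-- `U` is a compact open bisection. -/
def IsCOB (U : Set G) : Prop := IsCompact U ∧ IsOpen U ∧ 𝒢.IsBisection U

/-- Pointwise inverse of a set. -/
def setInv (U : Set G) : Set G := 𝒢.inv '' U

/-- Pointwise product of two sets (only composable products). -/
def setMul (U V : Set G) : Set G :=
  {g | ∃ a ∈ U, ∃ b ∈ V, 𝒢.src a = 𝒢.rng b ∧ g = 𝒢.mul a b}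

/-- `H` is a subgroupoid of `G`. -/
def IsSubgroupoid (H : Set G) : Prop :=
  (∀ a ∈ H, 𝒢.inv a ∈ H) ∧
  (∀ a ∈ H, ∀ b ∈ H, 𝒢.src a = 𝒢.rng b → 𝒢.mul a b ∈ H) ∧
  (∀ a ∈ H, 𝒢.src a ∈ H)

/-- The groupoid is effective: the interior of the isotropy is the unit space. -/
def Effective : Prop := interior 𝒢.iso = 𝒢.unitSpace

/-- A continuous (i.e. locally constant) `Rˣ`-valued 2-cocycle on `G`. -/
def IsCocycle {R : Type w} [CommRing R] (c : G → G → Rˣ) : Prop :=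
  IsLocallyConstant (fun p : {p : G × G // 𝒢.src p.1 = 𝒢.rng p.2} => c p.1.1 p.1.2) ∧
  (∀ a b d, 𝒢.src a = 𝒢.rng b → 𝒢.src b = 𝒢.rng d →
    c a b * c (𝒢.mul a b) d = c b d * c a (𝒢.mul b d)) ∧
  (∀ g, c (𝒢.rng g) g = 1 ∧ c g (𝒢.src g) = 1)

/-- Membership in the (cocycle-twisted) Steinberg algebra `A_R(G)`:
locally constant, compactly supported functions `G → R`. -/
def MemSt {R : Type w} [CommRing R] (f : G → R) : Prop :=
  IsLocallyConstant f ∧ ∃ K : Set G, IsCompact K ∧ Function.support f ⊆ K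

/-- Convolution on `A_R(G;σ)` twisted by a 2-cocycle `c`. -/
noncomputable def convC {R : Type w} [CommRing R] (c : G → G → Rˣ) (f g : G → R) :
    G → R := fun γ =>
  ∑ᶠ p : G × G,
    if 𝒢.src p.1 = 𝒢.rng p.2 ∧ 𝒢.mul p.1 p.2 = γ then
      (c p.1 p.2 : R) * f p.1 * g p.2 else 0

/-- A continuous `Γ`-grading on `G` (for a discrete group `Γ`). -/
def IsGrading {Γ : Type*} [Group Γ] (c : G → Γ) : Prop :=
  IsLocallyConstant c ∧ ∀ a b, 𝒢.src a = 𝒢.rng b → c (𝒢.mul a b) = c a * c b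

end EtaleGroupoid

/-- An ample groupoid: étale with a basis of compact open bisections. -/
structure AmpleGroupoid (G : Type u) [TopologicalSpace G] extends EtaleGroupoid G where
  ample : TopologicalSpace.IsTopologicalBasis {U : Set G | toEtaleGroupoid.IsCOB U}

/-- A discrete twist `G⁽⁰⁾ × Rˣ → Σ → G` over an ample groupoid `G`. -/
structure DiscreteTwist (R : Type w) [CommRing R] {G : Type u} {S : Type v}
    [TopologicalSpace G] [TopologicalSpace S]
    (𝒢 : AmpleGroupoid G) (𝒮 : EtaleGroupoid S) where
  i : G → Rˣ → S
  q : S → G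
  continuousOn_i : ∀ t : Rˣ, ContinuousOn (fun x => i x t) 𝒢.unitSpace
  continuous_q : Continuous q
  i_injOn : Set.InjOn (fun p : G × Rˣ => i p.1 p.2) (𝒢.unitSpace ×ˢ (Set.univ : Set Rˣ))
  q_surj : Function.Surjective q
  exact' : ∀ x ∈ 𝒢.unitSpace, q ⁻¹' {x} = {σ | ∃ t : Rˣ, σ = i x t}
  i_mul : ∀ x ∈ 𝒢.unitSpace, ∀ s t : Rˣ, 𝒮.mul (i x s) (i x t) = i x (s * t)
  unit_eq : 𝒮.unitSpace = (fun x => i x 1) '' 𝒢.unitSpace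
  q_mul : ∀ a b, 𝒮.src a = 𝒮.rng b → q (𝒮.mul a b) = 𝒢.mul (q a) (q b)
  q_inv : ∀ a, q (𝒮.inv a) = 𝒢.inv (q a)
  q_src : ∀ a, q (𝒮.src a) = 𝒢.src (q a)
  q_rng : ∀ a, q (𝒮.rng a) = 𝒢.rng (q a)
  q_unit_bij : Set.BijOn q 𝒮.unitSpace 𝒢.unitSpace
  central : ∀ (σ : S) (t : Rˣ),
    𝒮.mul (i (𝒢.rng (q σ)) t) σ = 𝒮.mul σ (i (𝒢.src (q σ)) t)
  loc_triv : ∀ α : G, ∃ B : Set G, IsOpen B ∧ α ∈ B ∧ 𝒢.IsBisection B ∧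
    ∃ P : G → S, ContinuousOn P B ∧ (∀ β ∈ B, q (P β) = β) ∧
      (∀ t : Rˣ, ContinuousOn (fun β => 𝒮.mul (i (𝒢.rng β) t) (P β)) B) ∧
      (∀ σ : S, q σ ∈ B →
        ∃! p : G × Rˣ, p.1 ∈ B ∧ 𝒮.mul (i (𝒢.rng p.1) p.2) (P p.1) = σ) ∧
      (∀ t : Rˣ, ∀ V ⊆ B, IsOpen V →
        IsOpen ((fun β => 𝒮.mul (i (𝒢.rng β) t) (P β)) '' V))

namespace DiscreteTwist

variable {R : Type w} [CommRing R] {G : Type u} {S : Type v}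
  [TopologicalSpace G] [TopologicalSpace S]
  {𝒢 : AmpleGroupoid G} {𝒮 : EtaleGroupoid S} (T : DiscreteTwist R 𝒢 𝒮)

/-- The action of `Rˣ` on `Σ`: `t • σ = i(r σ, t) σ`. -/
def act (t : Rˣ) (σ : S) : S := 𝒮.mul (T.i (𝒢.rng (T.q σ)) t) σ

/-- The function `1̃_X` associated to a subset `X ⊆ Σ`. -/
noncomputable def tilde (X : Set S) : S → R := fun σ =>
  if h : ∃ t : Rˣ, σ ∈ T.act t '' X then (((Classical.choose h)⁻¹ : Rˣ) : R) else 0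

/-- Membership in the twisted Steinberg algebra `A_R(G;Σ)`: locally constant,
`Rˣ`-contravariant functions with compact image of the support in `G`. -/
def MemA (f : S → R) : Prop :=
  IsLocallyConstant f ∧
  (∀ (t : Rˣ) (σ : S), f (T.act t σ) = ((t⁻¹ : Rˣ) : R) * f σ) ∧
  IsCompact (T.q '' Function.support f)

/-- A (not necessarily continuous) section of `q`. -/
noncomputable def sec : G → S := Function.surjInv T.q_surj

/-- Convolution on `A_R(G;Σ)`, defined via the section `sec`. -/
noncomputable def conv (f g : S → R) : S → R := fun σ =>
  ∑ᶠ α : G,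
    if 𝒢.rng α = 𝒢.rng (T.q σ) then
      f (T.sec α) * g (𝒮.mul (𝒮.inv (T.sec α)) σ) else 0

end DiscreteTwist

namespace EtaleGroupoid
variable {G : Type u} [TopologicalSpace G] (𝒢 : EtaleGroupoid G)

lemma src_mem_unitSpace (g : G) : 𝒢.src g ∈ 𝒢.unitSpace := ⟨g, rfl⟩
lemma rng_mem_unitSpace (g : G) : 𝒢.rng g ∈ 𝒢.unitSpace := ⟨𝒢.inv g, 𝒢.src_inv g⟩

lemma src_src (g : G) : 𝒢.src (𝒢.src g) = 𝒢.src g := by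
  conv_lhs => rw [← 𝒢.inv_mul_self g]
  rw [𝒢.src_mul _ _ (by rw [𝒢.src_inv])]

lemma rng_src (g : G) : 𝒢.rng (𝒢.src g) = 𝒢.src g := by
  conv_lhs => rw [← 𝒢.inv_mul_self g]
  rw [𝒢.rng_mul _ _ (by rw [𝒢.src_inv]), 𝒢.rng_inv]

lemma src_rng (g : G) : 𝒢.src (𝒢.rng g) = 𝒢.rng g := by
  have := 𝒢.src_src (𝒢.inv g)
  rwa [𝒢.src_inv] at this

lemma rng_rng (g : G) : 𝒢.rng (𝒢.rng g) = 𝒢.rng g := by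
  have := 𝒢.rng_src (𝒢.inv g)
  rwa [𝒢.src_inv] at this

lemma src_unit {u : G} (hu : u ∈ 𝒢.unitSpace) : 𝒢.src u = u := by
  obtain ⟨g, rfl⟩ := hu; exact 𝒢.src_src g

lemma rng_unit {u : G} (hu : u ∈ 𝒢.unitSpace) : 𝒢.rng u = u := by
  obtain ⟨g, rfl⟩ := hu; exact 𝒢.rng_src g

lemma continuous_rng : Continuous 𝒢.rng := by
  have : 𝒢.rng = fun g => 𝒢.src (𝒢.inv g) := by
    funext g; rw [𝒢.src_inv]
  rw [this]
  exact 𝒢.isLocalHomeomorph_src.continuous.comp 𝒢.continuous_inv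

lemma continuous_src : Continuous 𝒢.src := 𝒢.isLocalHomeomorph_src.continuous

lemma mul_cancel_left {a b : G} (h : 𝒢.src a = 𝒢.rng b) :
    𝒢.mul (𝒢.inv a) (𝒢.mul a b) = b := by
  rw [← 𝒢.mul_assoc' _ _ _ (by rw [𝒢.src_inv]) h, 𝒢.inv_mul_self, h, 𝒢.rng_mul_self]

lemma mul_cancel_left' {a c : G} (h : 𝒢.rng a = 𝒢.rng c) :
    𝒢.mul a (𝒢.mul (𝒢.inv a) c) = c := by
  rw [← 𝒢.mul_assoc' _ _ _ (by rw [𝒢.rng_inv]) (by rw [𝒢.src_inv, h]),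
    𝒢.mul_inv_self, h, 𝒢.rng_mul_self]

lemma inv_eq_of_mul {a b : G} (h : 𝒢.src a = 𝒢.rng b) (h2 : 𝒢.mul a b = 𝒢.rng a) :
    𝒢.inv a = b := by
  have := 𝒢.mul_cancel_left h
  rw [h2] at this
  rw [← this, ← 𝒢.src_inv, 𝒢.mul_src_self]

lemma inv_mul_rev {a b : G} (h : 𝒢.src a = 𝒢.rng b) :
    𝒢.inv (𝒢.mul a b) = 𝒢.mul (𝒢.inv b) (𝒢.inv a) := by
  have hc : 𝒢.src (𝒢.inv b) = 𝒢.rng (𝒢.inv a) := by rw [𝒢.src_inv, 𝒢.rng_inv, h]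
  apply 𝒢.inv_eq_of_mul
  · rw [𝒢.src_mul _ _ h, 𝒢.rng_mul _ _ hc, 𝒢.rng_inv]
  · have h1 : 𝒢.src b = 𝒢.rng (𝒢.mul (𝒢.inv b) (𝒢.inv a)) := by
      rw [𝒢.rng_mul _ _ hc, 𝒢.rng_inv]
    have h3 : 𝒢.mul b (𝒢.mul (𝒢.inv b) (𝒢.inv a)) = 𝒢.inv a :=
      𝒢.mul_cancel_left' (by rw [𝒢.rng_inv]; exact h.symm)
    rw [𝒢.mul_assoc' a b _ h h1, h3, 𝒢.mul_inv_self, 𝒢.rng_mul _ _ h]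

lemma inv_unit {u : G} (hu : u ∈ 𝒢.unitSpace) : 𝒢.inv u = u := by
  apply 𝒢.inv_eq_of_mul
  · rw [𝒢.src_unit hu, 𝒢.rng_unit hu]
  · rw [𝒢.rng_unit hu]
    have := 𝒢.rng_mul_self u
    rwa [𝒢.rng_unit hu] at this


end EtaleGroupoid

namespace DiscreteTwist
variable {R : Type w} [CommRing R] {G : Type u} {S : Type v}
  [TopologicalSpace G] [TopologicalSpace S]
  {𝒢 : AmpleGroupoid G} {𝒮 : EtaleGroupoid S} (T : DiscreteTwist R 𝒢 𝒮)

lemma q_i {x : G} (hx : x ∈ 𝒢.unitSpace) (t : Rˣ) : T.q (T.i x t) = x := by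
  have h := T.exact' x hx
  have : T.i x t ∈ T.q ⁻¹' {x} := by rw [h]; exact ⟨t, rfl⟩
  simpa using this

lemma unit_inj {τ τ' : S} (h1 : τ ∈ 𝒮.unitSpace) (h2 : τ' ∈ 𝒮.unitSpace)
    (hq : T.q τ = T.q τ') : τ = τ' := T.q_unit_bij.injOn h1 h2 hq

lemma comp_of_q {a b : S} (h : 𝒢.src (T.q a) = 𝒢.rng (T.q b)) :
    𝒮.src a = 𝒮.rng b :=
  T.unit_inj (𝒮.src_mem_unitSpace a) (𝒮.rng_mem_unitSpace b)
    (by rw [T.q_src, T.q_rng]; exact h)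

lemma i_one_mem_unit {x : G} (hx : x ∈ 𝒢.unitSpace) : T.i x 1 ∈ 𝒮.unitSpace := by
  rw [T.unit_eq]; exact ⟨x, hx, rfl⟩

lemma src_i_comp {σ : S} (t : Rˣ) :
    𝒮.src (T.i (𝒢.rng (T.q σ)) t) = 𝒮.rng σ :=
  T.comp_of_q (by rw [T.q_i (𝒢.rng_mem_unitSpace _) t, 𝒢.src_rng])

lemma q_act (t : Rˣ) (σ : S) : T.q (T.act t σ) = T.q σ := by
  show T.q (𝒮.mul (T.i (𝒢.rng (T.q σ)) t) σ) = T.q σ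
  rw [T.q_mul _ _ (T.src_i_comp t), T.q_i (𝒢.rng_mem_unitSpace _), 𝒢.rng_mul_self]

lemma i_inj {x : G} (hx : x ∈ 𝒢.unitSpace) {t t' : Rˣ} (h : T.i x t = T.i x t') :
    t = t' := by
  have := T.i_injOn (show ((x, t) : G × Rˣ) ∈ 𝒢.unitSpace ×ˢ univ from ⟨hx, mem_univ _⟩)
    (show ((x, t') : G × Rˣ) ∈ 𝒢.unitSpace ×ˢ univ from ⟨hx, mem_univ _⟩)
    (show (fun p : G × Rˣ => T.i p.1 p.2) (x, t) = (fun p : G × Rˣ => T.i p.1 p.2) (x, t') from h)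
  exact congrArg Prod.snd this

lemma inv_i {x : G} (hx : x ∈ 𝒢.unitSpace) (t : Rˣ) :
    𝒮.inv (T.i x t) = T.i x t⁻¹ := by
  apply 𝒮.inv_eq_of_mul
  · exact T.comp_of_q (by rw [T.q_i hx, T.q_i hx, 𝒢.src_unit hx, 𝒢.rng_unit hx])
  · rw [T.i_mul x hx t t⁻¹, mul_inv_cancel]
    exact T.unit_inj (T.i_one_mem_unit hx) (𝒮.rng_mem_unitSpace _)
      (by rw [T.q_i hx, T.q_rng, T.q_i hx, 𝒢.rng_unit hx])

lemma act_of_q_eq {σ τ : S} (h : T.q σ = T.q τ) : ∃ t : Rˣ, σ = T.act t τ := by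
  have hc : 𝒮.src σ = 𝒮.rng (𝒮.inv τ) :=
    T.comp_of_q (by rw [T.q_inv, 𝒢.rng_inv, h])
  have hxu : 𝒢.rng (T.q σ) ∈ 𝒢.unitSpace := 𝒢.rng_mem_unitSpace _
  have hm : T.q (𝒮.mul σ (𝒮.inv τ)) = 𝒢.rng (T.q σ) := by
    rw [T.q_mul _ _ hc, T.q_inv, ← h, 𝒢.mul_inv_self]
  have hmem : 𝒮.mul σ (𝒮.inv τ) ∈ T.q ⁻¹' {𝒢.rng (T.q σ)} := by simp [hm]
  rw [T.exact' _ hxu] at hmem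
  obtain ⟨t, ht⟩ := hmem
  refine ⟨t, ?_⟩
  show σ = 𝒮.mul (T.i (𝒢.rng (T.q τ)) t) τ
  rw [← h, ← ht]
  rw [𝒮.mul_assoc' σ (𝒮.inv τ) τ hc (by rw [𝒮.src_inv]), 𝒮.inv_mul_self]
  have hst : 𝒮.src τ = 𝒮.src σ :=
    T.unit_inj (𝒮.src_mem_unitSpace τ) (𝒮.src_mem_unitSpace σ)
      (by rw [T.q_src, T.q_src, h])
  rw [hst, 𝒮.mul_src_self]

lemma act_inj {t t' : Rˣ} {σ : S} (h : T.act t σ = T.act t' σ) : t = t' := by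
  have key : ∀ s : Rˣ, 𝒮.mul (T.act s σ) (𝒮.inv σ) = T.i (𝒢.rng (T.q σ)) s := by
    intro s
    show 𝒮.mul (𝒮.mul (T.i (𝒢.rng (T.q σ)) s) σ) (𝒮.inv σ) = _
    rw [𝒮.mul_assoc' _ σ (𝒮.inv σ) (T.src_i_comp s) (𝒮.rng_inv σ).symm,
      𝒮.mul_inv_self]
    conv_lhs => rw [← T.src_i_comp (σ := σ) s]
    exact 𝒮.mul_src_self _
  have e : T.i (𝒢.rng (T.q σ)) t = T.i (𝒢.rng (T.q σ)) t' := by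
    rw [← key t, ← key t', h]
  exact T.i_inj (𝒢.rng_mem_unitSpace _) e

lemma inv_act (t : Rˣ) (σ : S) : 𝒮.inv (T.act t σ) = T.act t⁻¹ (𝒮.inv σ) := by
  show 𝒮.inv (𝒮.mul (T.i (𝒢.rng (T.q σ)) t) σ)
      = 𝒮.mul (T.i (𝒢.rng (T.q (𝒮.inv σ))) t⁻¹) (𝒮.inv σ)
  rw [𝒮.inv_mul_rev (T.src_i_comp t), T.inv_i (𝒢.rng_mem_unitSpace _) t]
  rw [T.central (𝒮.inv σ) t⁻¹, T.q_inv, 𝒢.src_inv]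

lemma mul_act {a b : S} (h : 𝒢.src (T.q a) = 𝒢.rng (T.q b)) (t : Rˣ) :
    𝒮.mul a (T.act t b) = T.act t (𝒮.mul a b) := by
  show 𝒮.mul a (𝒮.mul (T.i (𝒢.rng (T.q b)) t) b)
      = 𝒮.mul (T.i (𝒢.rng (T.q (𝒮.mul a b))) t) (𝒮.mul a b)
  have hqab : T.q (𝒮.mul a b) = 𝒢.mul (T.q a) (T.q b) := T.q_mul a b (T.comp_of_q h)
  have h1 : 𝒮.src a = 𝒮.rng (T.i (𝒢.rng (T.q b)) t) :=
    T.comp_of_q (by rw [T.q_i (𝒢.rng_mem_unitSpace _), 𝒢.rng_rng]; exact h)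
  have h2 : 𝒮.src (T.i (𝒢.rng (T.q b)) t) = 𝒮.rng b := T.src_i_comp t
  rw [← 𝒮.mul_assoc' a _ b h1 h2]
  have hcen := T.central a t
  rw [← h, ← hcen]
  have h3 : 𝒮.src (T.i (𝒢.rng (T.q a)) t) = 𝒮.rng a := T.src_i_comp t
  rw [𝒮.mul_assoc' _ a b h3 (T.comp_of_q h), hqab, 𝒢.rng_mul _ _ h]

lemma act_mul {a c : S} (h : 𝒢.src (T.q a) = 𝒢.rng (T.q c)) (t : Rˣ) :
    𝒮.mul (T.act t a) c = T.act t (𝒮.mul a c) := by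
  show 𝒮.mul (𝒮.mul (T.i (𝒢.rng (T.q a)) t) a) c
      = 𝒮.mul (T.i (𝒢.rng (T.q (𝒮.mul a c))) t) (𝒮.mul a c)
  rw [𝒮.mul_assoc' _ a c (T.src_i_comp t) (T.comp_of_q h),
    T.q_mul a c (T.comp_of_q h), 𝒢.rng_mul _ _ h]

lemma tilde_eq_zero {X : Set S} {σ : S} (h : ¬ ∃ t : Rˣ, σ ∈ T.act t '' X) :
    T.tilde X σ = 0 := dif_neg h

end DiscreteTwist

end

/-- for a `Γ`-graded discrete `R`-twist and a nonzero
homogeneous `g_γ ∈ A_R(G;Σ)_γ`, there is a compact open bisection `B ⊆ Σ_γ`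
such that `f = 1̃_{B⁻¹} * g_γ` is a nonzero element of `A_R(G_ε;Σ_ε)` whose
support meets `Σ⁽⁰⁾` and is contained in `Σ_ε`. -/
theorem stmt_13 {R : Type*} [CommRing R] {G S : Type*}
    [TopologicalSpace G] [TopologicalSpace S] [T2Space G] [T2Space S]
    {𝒢 : AmpleGroupoid G} {𝒮 : EtaleGroupoid S} (T : DiscreteTwist R 𝒢 𝒮)
    {Γ : Type*} [Group Γ]
    (cG : G → Γ) (cS : S → Γ)
    (hcG : 𝒢.IsGrading cG) (hcS : 𝒮.IsGrading cS)
    (hcomm : ∀ σ : S, cS σ = cG (T.q σ))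
    (γ : Γ) (g : S → R) (hg : T.MemA g)
    (hhom : T.q '' Function.support g ⊆ cG ⁻¹' {γ}) (hne : g ≠ 0) :
    ∃ B : Set S, 𝒮.IsCOB B ∧ B ⊆ cS ⁻¹' {γ} ∧
      ∃ f : S → R, f = T.conv (T.tilde (𝒮.setInv B)) g ∧
        f ≠ 0 ∧ T.MemA f ∧
        (Function.support f ∩ 𝒮.unitSpace).Nonempty ∧
        Function.support f ⊆ cS ⁻¹' {1} ∧
        T.q '' Function.support f ⊆ cG ⁻¹' {1} := by
  classical
  haveI : Nontrivial R := by
    by_contra hcon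
    rw [not_nontrivial_iff_subsingleton] at hcon
    exact hne (funext fun σ => Subsingleton.elim _ _)
  obtain ⟨σ₀, hσ₀⟩ : ∃ σ₀, g σ₀ ≠ 0 := by
    by_contra hcon
    push_neg at hcon
    exact hne (funext fun σ => hcon σ)
  obtain ⟨B₀, hB₀open, hαB₀, hB₀bis, P, hPcont, hPq, hMcont, hMuniq, hMopen⟩ :=
    T.loc_triv (T.q σ₀)
  have hγopen : IsOpen (cG ⁻¹' {γ}) := hcG.1 _
  have hα₀γ : T.q σ₀ ∈ cG ⁻¹' {γ} := hhom ⟨σ₀, hσ₀, rfl⟩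
  obtain ⟨BG, hBGcob, hαBG, hBGsub⟩ :=
    𝒢.ample.exists_subset_of_mem_open (⟨hαB₀, hα₀γ⟩ : T.q σ₀ ∈ B₀ ∩ cG ⁻¹' {γ})
      (hB₀open.inter hγopen)
  have hBGsubB₀ : BG ⊆ B₀ := fun x hx => (hBGsub hx).1
  have hBGγ : ∀ β ∈ BG, cG β = γ := fun β hβ => (hBGsub hβ).2
  have hBGcomp : IsCompact BG := hBGcob.1
  have hBGopen : IsOpen BG := hBGcob.2.1
  have hBGsrcInj : Set.InjOn 𝒢.src BG := hBGcob.2.2.1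
  have hBGrngInj : Set.InjOn 𝒢.rng BG := hBGcob.2.2.2
  obtain ⟨t₀, ht₀⟩ := T.act_of_q_eq (show T.q σ₀ = T.q (P (T.q σ₀)) from (hPq _ hαB₀).symm)
  set M : G → S := fun β => 𝒮.mul (T.i (𝒢.rng β) t₀) (P β) with hM
  have hqM : ∀ β ∈ B₀, T.q (M β) = β := by
    intro β hβ
    have hc : 𝒮.src (T.i (𝒢.rng β) t₀) = 𝒮.rng (P β) :=
      T.comp_of_q (by rw [T.q_i (𝒢.rng_mem_unitSpace β), 𝒢.src_rng, hPq β hβ])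
    show T.q (𝒮.mul (T.i (𝒢.rng β) t₀) (P β)) = β
    rw [T.q_mul _ _ hc, T.q_i (𝒢.rng_mem_unitSpace β), hPq β hβ, 𝒢.rng_mul_self]
  have hMα₀ : M (T.q σ₀) = σ₀ := by
    have h1 : T.act t₀ (P (T.q σ₀)) = M (T.q σ₀) := by
      show 𝒮.mul (T.i (𝒢.rng (T.q (P (T.q σ₀)))) t₀) _ = _
      rw [hPq _ hαB₀]
    rw [← h1, ← ht₀]
  set B : Set S := M '' BG with hB
  have hqB : ∀ b ∈ B, T.q b ∈ BG ∧ M (T.q b) = b := by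
    rintro b ⟨β, hβ, rfl⟩
    rw [hqM β (hBGsubB₀ hβ)]
    exact ⟨hβ, rfl⟩
  have hσ₀B : σ₀ ∈ B := ⟨T.q σ₀, hαBG, hMα₀⟩
  have hUniq : ∀ (x : G) b₁ b₂, b₁ ∈ B → b₂ ∈ B → 𝒢.src (T.q b₁) = x →
      𝒢.src (T.q b₂) = x → b₁ = b₂ := by
    intro x b₁ b₂ h₁ h₂ hs₁ hs₂
    obtain ⟨hq₁, hM₁⟩ := hqB b₁ h₁
    obtain ⟨hq₂, hM₂⟩ := hqB b₂ h₂
    have hq : T.q b₁ = T.q b₂ := hBGsrcInj hq₁ hq₂ (by rw [hs₁, hs₂])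
    rw [← hM₁, ← hM₂, hq]
  -- closed form of the convolution
  set F : S → R := fun σ =>
    if h : ∃ b, b ∈ B ∧ 𝒢.src (T.q b) = 𝒢.rng (T.q σ) then g (𝒮.mul h.choose σ)
    else 0 with hF
  have hFval : ∀ σ b, b ∈ B → 𝒢.src (T.q b) = 𝒢.rng (T.q σ) → F σ = g (𝒮.mul b σ) := by
    intro σ b hb hsb
    have h : ∃ b, b ∈ B ∧ 𝒢.src (T.q b) = 𝒢.rng (T.q σ) := ⟨b, hb, hsb⟩
    have hcb : h.choose = b :=
      hUniq (𝒢.rng (T.q σ)) _ _ h.choose_spec.1 hb h.choose_spec.2 hsb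
    simp only [hF]
    rw [dif_pos h, hcb]
  have hFzero : ∀ σ, ¬(∃ b, b ∈ B ∧ 𝒢.src (T.q b) = 𝒢.rng (T.q σ)) → F σ = 0 := by
    intro σ h
    simp only [hF]
    rw [dif_neg h]
  have hsec : ∀ α, T.q (T.sec α) = α := fun α => Function.surjInv_eq T.q_surj α
  have hconv : T.conv (T.tilde (𝒮.setInv B)) g = F := by
    funext σ
    show (∑ᶠ α : G, if 𝒢.rng α = 𝒢.rng (T.q σ) then
        T.tilde (𝒮.setInv B) (T.sec α) * g (𝒮.mul (𝒮.inv (T.sec α)) σ) else 0) = F σ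
    have hvan : ∀ α, (¬ ∃ b, b ∈ B ∧ 𝒢.src (T.q b) = 𝒢.rng (T.q σ) ∧ α = 𝒢.inv (T.q b)) →
        (if 𝒢.rng α = 𝒢.rng (T.q σ) then
          T.tilde (𝒮.setInv B) (T.sec α) * g (𝒮.mul (𝒮.inv (T.sec α)) σ) else 0) = 0 := by
      intro α hα
      by_cases hc : 𝒢.rng α = 𝒢.rng (T.q σ)
      · rw [if_pos hc]
        have ht0 : T.tilde (𝒮.setInv B) (T.sec α) = 0 := by
          apply T.tilde_eq_zero
          rintro ⟨t, x, hx, heq⟩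
          obtain ⟨b', hb', rfl⟩ := hx
          apply hα
          have hqα : α = 𝒢.inv (T.q b') := by
            rw [← hsec α, ← heq, T.q_act, T.q_inv]
          refine ⟨b', hb', ?_, hqα⟩
          rw [← hc, hqα, 𝒢.rng_inv]
        rw [ht0, zero_mul]
      · rw [if_neg hc]
    by_cases h : ∃ b, b ∈ B ∧ 𝒢.src (T.q b) = 𝒢.rng (T.q σ)
    · obtain ⟨b, hb, hsb⟩ := h
      rw [hFval σ b hb hsb]
      have hone : ∀ α, α ≠ 𝒢.inv (T.q b) →
          (if 𝒢.rng α = 𝒢.rng (T.q σ) then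
            T.tilde (𝒮.setInv B) (T.sec α) * g (𝒮.mul (𝒮.inv (T.sec α)) σ) else 0) = 0 := by
        intro α hα
        apply hvan
        rintro ⟨b'', hb'', hsb'', rfl⟩
        exact hα (by rw [hUniq (𝒢.rng (T.q σ)) b'' b hb'' hb hsb'' hsb])
      rw [finsum_eq_single _ (𝒢.inv (T.q b)) hone]
      have hcond : 𝒢.rng (𝒢.inv (T.q b)) = 𝒢.rng (T.q σ) := by rw [𝒢.rng_inv, hsb]
      rw [if_pos hcond]
      obtain ⟨s, hs⟩ := T.act_of_q_eq
        (show T.q (T.sec (𝒢.inv (T.q b))) = T.q (𝒮.inv b) by rw [hsec, T.q_inv])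
      have htv : T.tilde (𝒮.setInv B) (T.sec (𝒢.inv (T.q b))) = ((s⁻¹ : Rˣ) : R) := by
        rw [hs]
        have hex : ∃ t : Rˣ, T.act s (𝒮.inv b) ∈ T.act t '' (𝒮.setInv B) :=
          ⟨s, 𝒮.inv b, ⟨b, hb, rfl⟩, rfl⟩
        show (if h : ∃ t : Rˣ, T.act s (𝒮.inv b) ∈ T.act t '' (𝒮.setInv B) then
            (((Classical.choose h)⁻¹ : Rˣ) : R) else 0) = _
        rw [dif_pos hex]
        obtain ⟨x, hx, heq⟩ := hex.choose_spec
        obtain ⟨b', hb', rfl⟩ := hx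
        have hq' : T.q b' = T.q b := by
          have h2 := congrArg T.q heq
          rw [T.q_act, T.q_act, T.q_inv, T.q_inv] at h2
          calc T.q b' = 𝒢.inv (𝒢.inv (T.q b')) := (𝒢.inv_inv _).symm
            _ = 𝒢.inv (𝒢.inv (T.q b)) := by rw [h2]
            _ = T.q b := 𝒢.inv_inv _
        have hb'b : b' = b := by
          obtain ⟨hm1, hM₁⟩ := hqB b' hb'
          obtain ⟨hm2, hM₂⟩ := hqB b hb
          rw [← hM₁, ← hM₂, hq']
        rw [hb'b] at heq
        show ((hex.choose⁻¹ : Rˣ) : R) = ((s⁻¹ : Rˣ) : R)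
        rw [T.act_inj heq]
      rw [htv, hs, T.inv_act, 𝒮.inv_inv]
      rw [T.act_mul hsb s⁻¹, hg.2.1 s⁻¹ (𝒮.mul b σ)]
      rw [inv_inv, ← mul_assoc, ← Units.val_mul, inv_mul_cancel, Units.val_one, one_mul]
    · rw [hFzero σ h]
      apply finsum_eq_zero_of_forall_eq_zero
      intro α
      apply hvan
      rintro ⟨b, hb, hsb, rfl⟩
      exact h ⟨b, hb, hsb⟩
  -- properties of B
  have hBcompact : IsCompact B := by
    rw [hB, hM]
    exact hBGcomp.image_of_continuousOn ((hMcont t₀).mono hBGsubB₀)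
  have hBopen : IsOpen B := by
    rw [hB, hM]
    exact hMopen t₀ BG hBGsubB₀ hBGopen
  have hBsrcInj : Set.InjOn 𝒮.src B := by
    rintro b₁ h₁ b₂ h₂ hsrc
    obtain ⟨hq₁, hM₁⟩ := hqB b₁ h₁
    obtain ⟨hq₂, hM₂⟩ := hqB b₂ h₂
    have hq : T.q b₁ = T.q b₂ := hBGsrcInj hq₁ hq₂
      (by rw [← T.q_src, ← T.q_src, hsrc])
    rw [← hM₁, ← hM₂, hq]
  have hBrngInj : Set.InjOn 𝒮.rng B := by
    rintro b₁ h₁ b₂ h₂ hrng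
    obtain ⟨hq₁, hM₁⟩ := hqB b₁ h₁
    obtain ⟨hq₂, hM₂⟩ := hqB b₂ h₂
    have hq : T.q b₁ = T.q b₂ := hBGrngInj hq₁ hq₂
      (by rw [← T.q_rng, ← T.q_rng, hrng])
    rw [← hM₁, ← hM₂, hq]
  -- equivariance
  have hFequiv : ∀ (t : Rˣ) σ, F (T.act t σ) = ((t⁻¹ : Rˣ) : R) * F σ := by
    intro t σ
    by_cases h : ∃ b, b ∈ B ∧ 𝒢.src (T.q b) = 𝒢.rng (T.q σ)
    · obtain ⟨b, hb, hsb⟩ := h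
      have hsb' : 𝒢.src (T.q b) = 𝒢.rng (T.q (T.act t σ)) := by rw [T.q_act]; exact hsb
      rw [hFval _ b hb hsb', hFval σ b hb hsb, T.mul_act hsb t, hg.2.1 t]
    · have h' : ¬ ∃ b, b ∈ B ∧ 𝒢.src (T.q b) = 𝒢.rng (T.q (T.act t σ)) := by
        rintro ⟨b, hb, hsb⟩
        exact h ⟨b, hb, by rwa [T.q_act] at hsb⟩
      rw [hFzero _ h', hFzero σ h, mul_zero]
  -- nonvanishing at the unit src σ₀
  have hσs : 𝒢.src (T.q σ₀) = 𝒢.rng (T.q (𝒮.src σ₀)) := by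
    rw [T.q_src, 𝒢.rng_src]
  have hFne : F (𝒮.src σ₀) = g σ₀ := by
    rw [hFval _ σ₀ hσ₀B hσs, 𝒮.mul_src_self]
  -- grading of the support
  have hsupp : ∀ σ, F σ ≠ 0 → cS σ = 1 := by
    intro σ hFσ
    have h : ∃ b, b ∈ B ∧ 𝒢.src (T.q b) = 𝒢.rng (T.q σ) := by
      by_contra hcon; exact hFσ (hFzero σ hcon)
    obtain ⟨b, hb, hsb⟩ := h
    have hgne : g (𝒮.mul b σ) ≠ 0 := by rw [← hFval σ b hb hsb]; exact hFσ
    have hmem : T.q (𝒮.mul b σ) ∈ cG ⁻¹' {γ} := hhom ⟨_, hgne, rfl⟩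
    have hqmul : T.q (𝒮.mul b σ) = 𝒢.mul (T.q b) (T.q σ) := T.q_mul _ _ (T.comp_of_q hsb)
    have h1 : cG (𝒢.mul (T.q b) (T.q σ)) = γ := by rw [← hqmul]; exact hmem
    rw [hcG.2 _ _ hsb, hBGγ _ (hqB b hb).1] at h1
    have h2 : cG (T.q σ) = 1 :=
      mul_left_cancel (a := γ) (by rw [mul_one]; exact h1)
    rw [hcomm]; exact h2
  -- compact support
  have hKg : IsCompact (T.q '' Function.support g) := hg.2.2
  have hcompactF : IsCompact (T.q '' Function.support F) := by
    set E : Set (G × G) := (BG ×ˢ (T.q '' Function.support g)) ∩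
      {p : G × G | 𝒢.src (𝒢.inv p.1) = 𝒢.rng p.2} with hE
    have hEcomp : IsCompact E := by
      apply (hBGcomp.prod hKg).inter_right
      exact isClosed_eq ((𝒢.continuous_src.comp 𝒢.continuous_inv).comp continuous_fst)
        (𝒢.continuous_rng.comp continuous_snd)
    have hcontPhi : ContinuousOn (fun p : G × G => 𝒢.mul (𝒢.inv p.1) p.2) E := by
      have hpair : Continuous (fun p : G × G => (𝒢.inv p.1, p.2)) :=
        (𝒢.continuous_inv.comp continuous_fst).prodMk continuous_snd
      exact 𝒢.continuousOn_mul.comp hpair.continuousOn (fun p hp => hp.2)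
    have himg : T.q '' Function.support F
        = (fun p : G × G => 𝒢.mul (𝒢.inv p.1) p.2) '' E := by
      ext α
      constructor
      · rintro ⟨σ, hσ, rfl⟩
        obtain ⟨b, hb, hsb⟩ : ∃ b, b ∈ B ∧ 𝒢.src (T.q b) = 𝒢.rng (T.q σ) := by
          by_contra hcon; exact hσ (hFzero σ hcon)
        have hgne : g (𝒮.mul b σ) ≠ 0 := by rw [← hFval σ b hb hsb]; exact hσ
        refine ⟨(T.q b, T.q (𝒮.mul b σ)), ⟨⟨(hqB b hb).1, ⟨_, hgne, rfl⟩⟩, ?_⟩, ?_⟩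
        · show 𝒢.src (𝒢.inv (T.q b)) = 𝒢.rng (T.q (𝒮.mul b σ))
          rw [𝒢.src_inv, T.q_mul _ _ (T.comp_of_q hsb), 𝒢.rng_mul _ _ hsb]
        · show 𝒢.mul (𝒢.inv (T.q b)) (T.q (𝒮.mul b σ)) = T.q σ
          rw [T.q_mul _ _ (T.comp_of_q hsb), 𝒢.mul_cancel_left hsb]
      · rintro ⟨⟨β, δ⟩, ⟨⟨hβ, hδ⟩, hcomp⟩, rfl⟩
        obtain ⟨τ, hτ, rfl⟩ := hδ
        have hcomp' : 𝒢.src (𝒢.inv β) = 𝒢.rng (T.q τ) := hcomp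
        have hβB₀ := hBGsubB₀ hβ
        have hbB : M β ∈ B := ⟨β, hβ, rfl⟩
        have hqMβ : T.q (M β) = β := hqM β hβB₀
        have hcomp2 : 𝒮.src (𝒮.inv (M β)) = 𝒮.rng τ :=
          T.comp_of_q (by rw [T.q_inv, hqMβ]; exact hcomp')
        have hqσ : T.q (𝒮.mul (𝒮.inv (M β)) τ) = 𝒢.mul (𝒢.inv β) (T.q τ) := by
          rw [T.q_mul _ _ hcomp2, T.q_inv, hqMβ]
        have hsb : 𝒢.src (T.q (M β)) = 𝒢.rng (T.q (𝒮.mul (𝒮.inv (M β)) τ)) := by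
          rw [hqMβ, hqσ, 𝒢.rng_mul _ _ hcomp', 𝒢.rng_inv]
        have hrng : 𝒮.rng (M β) = 𝒮.rng τ :=
          T.unit_inj (𝒮.rng_mem_unitSpace _) (𝒮.rng_mem_unitSpace _)
            (by rw [T.q_rng, T.q_rng, hqMβ, ← 𝒢.src_inv]; exact hcomp')
        have hFσ : F (𝒮.mul (𝒮.inv (M β)) τ) = g τ := by
          rw [hFval _ (M β) hbB hsb, 𝒮.mul_cancel_left' hrng]
        refine ⟨𝒮.mul (𝒮.inv (M β)) τ, ?_, hqσ⟩
        rw [Function.mem_support, hFσ]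
        exact hτ
    rw [himg]
    exact hEcomp.image_of_continuousOn hcontPhi
  -- local constancy
  have hexiff : ∀ σ, (∃ b, b ∈ B ∧ 𝒢.src (T.q b) = 𝒢.rng (T.q σ)) ↔
      𝒢.rng (T.q σ) ∈ 𝒢.src '' BG := by
    intro σ
    constructor
    · rintro ⟨b, hb, hsb⟩; exact ⟨T.q b, (hqB b hb).1, hsb⟩
    · rintro ⟨β, hβ, hsrc⟩
      exact ⟨M β, ⟨β, hβ, rfl⟩, by rw [hqM β (hBGsubB₀ hβ)]; exact hsrc⟩
  have hFlc : IsLocallyConstant F := by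
    rw [IsLocallyConstant.iff_exists_open]
    intro σ
    by_cases h : ∃ b, b ∈ B ∧ 𝒢.src (T.q b) = 𝒢.rng (T.q σ)
    · obtain ⟨b, hb, hsb⟩ := h
      obtain ⟨e, heβ, hesrc⟩ := 𝒢.isLocalHomeomorph_src (T.q b)
      set e' := e.restrOpen BG hBGopen with he'
      have he'coe : ∀ x, e' x = 𝒢.src x := by
        intro x; rw [hesrc]; rfl
      have heβ' : T.q b ∈ e'.source := by
        rw [he', e.restrOpen_source]
        exact ⟨heβ, (hqB b hb).1⟩
      have he'srcBG : ∀ y ∈ e'.target, e'.symm y ∈ BG := by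
        intro y hy
        have := e'.map_target hy
        rw [he', e.restrOpen_source] at this
        exact this.2
      have he'src : ∀ y ∈ e'.target, 𝒢.src (e'.symm y) = y := by
        intro y hy
        rw [← he'coe]
        exact e'.right_inv hy
      set bm : S → S := fun σ' => M (e'.symm (𝒢.rng (T.q σ'))) with hbm
      set V := (fun σ' : S => 𝒢.rng (T.q σ')) ⁻¹' e'.target with hV
      have hVopen : IsOpen V :=
        e'.open_target.preimage (𝒢.continuous_rng.comp T.continuous_q)
      have hσV : σ ∈ V := by
        show 𝒢.rng (T.q σ) ∈ e'.target
        have h1 : 𝒢.rng (T.q σ) = e' (T.q b) := by rw [he'coe, hsb]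
        rw [h1]
        exact e'.map_source heβ'
      have hbmfacts : ∀ σ' ∈ V, bm σ' ∈ B ∧ 𝒢.src (T.q (bm σ')) = 𝒢.rng (T.q σ') := by
        intro σ' hσ'
        have ht : 𝒢.rng (T.q σ') ∈ e'.target := hσ'
        have hsBG : e'.symm (𝒢.rng (T.q σ')) ∈ BG := he'srcBG _ ht
        refine ⟨⟨_, hsBG, rfl⟩, ?_⟩
        rw [hbm]
        rw [hqM _ (hBGsubB₀ hsBG)]
        exact he'src _ ht
      have hbmcont : ContinuousOn bm V := by
        have c1 : Continuous fun σ' : S => 𝒢.rng (T.q σ') :=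
          𝒢.continuous_rng.comp T.continuous_q
        have c2 : ContinuousOn (e'.symm : G → G) e'.target := e'.continuousOn_symm
        have c3 : ContinuousOn M B₀ := hMcont t₀
        apply c3.comp ((c2.comp c1.continuousOn (fun σ' hσ' => hσ')))
        intro σ' hσ'
        exact hBGsubB₀ (he'srcBG _ hσ')
      have hPhiCont : ContinuousOn (fun σ' => 𝒮.mul (bm σ') σ') V := by
        have hpair : ContinuousOn (fun σ' : S => (bm σ', σ')) V :=
          hbmcont.prodMk (continuousOn_id)
        apply 𝒮.continuousOn_mul.comp hpair
        intro σ' hσ'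
        exact T.comp_of_q (hbmfacts σ' hσ').2
      have hW : IsOpen (g ⁻¹' {g (𝒮.mul (bm σ) σ)}) := hg.1 _
      refine ⟨V ∩ (fun σ' => 𝒮.mul (bm σ') σ') ⁻¹' (g ⁻¹' {g (𝒮.mul (bm σ) σ)}),
        hPhiCont.isOpen_inter_preimage hVopen hW, ⟨hσV, rfl⟩, ?_⟩
      intro σ' hσ'
      have h1 := hbmfacts σ' hσ'.1
      have h2 := hbmfacts σ hσV
      rw [hFval σ' (bm σ') h1.1 h1.2, hFval σ (bm σ) h2.1 h2.2]
      exact hσ'.2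
    · have hKsrc : IsCompact (𝒢.src '' BG) := hBGcomp.image 𝒢.continuous_src
      have hKcl : IsClosed (𝒢.src '' BG) := hKsrc.isClosed
      refine ⟨(fun σ' : S => 𝒢.rng (T.q σ')) ⁻¹' (𝒢.src '' BG)ᶜ,
        hKcl.isOpen_compl.preimage (𝒢.continuous_rng.comp T.continuous_q), ?_, ?_⟩
      · show 𝒢.rng (T.q σ) ∈ (𝒢.src '' BG)ᶜ
        intro hmem
        exact h ((hexiff σ).mpr hmem)
      · intro σ' hσ'
        rw [hFzero σ' (fun hc => hσ' ((hexiff σ').mp hc)), hFzero σ h]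
  -- assembly
  refine ⟨B, ⟨hBcompact, hBopen, hBsrcInj, hBrngInj⟩, ?_,
    T.conv (T.tilde (𝒮.setInv B)) g, rfl, ?_, ?_, ?_, ?_, ?_⟩
  · intro b hb
    show cS b ∈ ({γ} : Set Γ)
    rw [mem_singleton_iff, hcomm]
    exact hBGγ _ (hqB b hb).1
  · rw [hconv]
    intro h0
    apply hσ₀
    rw [← hFne, h0]
    rfl
  · rw [hconv]
    exact ⟨hFlc, hFequiv, hcompactF⟩
  · rw [hconv]
    refine ⟨𝒮.src σ₀, Function.mem_support.mpr ?_, σ₀, rfl⟩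
    rw [hFne]
    exact hσ₀
  · rw [hconv]
    intro σ hσ
    show cS σ ∈ ({1} : Set Γ)
    rw [mem_singleton_iff]
    exact hsupp σ hσ
  · rw [hconv]
    rintro α ⟨σ, hσ, rfl⟩
    show cG (T.q σ) ∈ ({1} : Set Γ)
    rw [mem_singleton_iff, ← hcomm]
    exact hsupp σ hσ
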